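/- Let [V V_c] ∈ R^{n_d×n_d} be orthogonal, W ∈ R^{n_s×ℓ_s} with orthonormal columns, Ĵ_i = w_i ⋆ J, and let V_c^T [Ĵ_1 … Ĵ_{ℓ_s}] = Φ Ω Ψ^T be an SVD. Then Γ = [φ_1 … φ_s] (the first s left singular vectors) maximizes ‖(W^T ⊗ [V, V_c Γ̃]^T) J‖_F^2 over all Γ̃ ∈ R^{(n_d−ℓ_d)×s} with orthonormal columns. -/

import Mathlib

open Matrix
open scoped BigOperators Kronecker

/-- Squared Frobenius norm of a real matrix. -/
def frobSq {α β : Type*} [Fintype α] [Fintype β] (A : Matrix α β ℝ) : ℝ :=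
  ∑ i, ∑ j, A i j ^ 2

/-- `w ⋆ J ∈ ℝ^{n_d × n_p}` with `k`-th column `∑ j, w j • J_{j,k}`. -/
def starOp {nd ns np : ℕ} (w : Fin ns → ℝ) (J : Matrix (Fin ns × Fin nd) (Fin np) ℝ) :
    Matrix (Fin nd) (Fin np) ℝ :=
  Matrix.of fun i k => ∑ j, w j * J (j, i) k

/-- Rectangular "diagonal" matrix of singular values, the column index being a product
type enumerated by `finProdFinEquiv`. -/
def svDiagR (m : ℕ) (a b : ℕ) (ω : ℕ → ℝ) : Matrix (Fin m) (Fin a × Fin b) ℝ :=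
  Matrix.of fun i q => if (i : ℕ) = ((finProdFinEquiv q : Fin (a * b)) : ℕ) then ω i else 0

/- ---------- auxiliary lemmas ---------- -/

lemma frobSq_eq_trace {α β : Type*} [Fintype α] [Fintype β] (A : Matrix α β ℝ) :
    frobSq A = Matrix.trace (A * Aᵀ) := by
  simp [frobSq, Matrix.trace, Matrix.diag, Matrix.mul_apply, sq]

lemma frobSq_mul_orth {α β : Type*} [Fintype α] [Fintype β] [DecidableEq β]
    (A : Matrix α β ℝ) (Ψ : Matrix β β ℝ) (hΨ : Ψᵀ * Ψ = 1) :
    frobSq (A * Ψᵀ) = frobSq A := by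
  rw [frobSq_eq_trace, frobSq_eq_trace, Matrix.transpose_mul, Matrix.transpose_transpose]
  have h : Ψᵀ * (Ψ * Aᵀ) = Aᵀ := by rw [← Matrix.mul_assoc, hΨ, Matrix.one_mul]
  rw [Matrix.mul_assoc, h]

lemma frobSq_rows_split {γ α β δ : Type*} [Fintype γ] [Fintype α] [Fintype β] [Fintype δ]
    (A : Matrix (γ × (α ⊕ β)) δ ℝ) :
    frobSq A = (∑ a : γ, ∑ b : α, ∑ k, A (a, Sum.inl b) k ^ 2)
      + ∑ a : γ, ∑ b : β, ∑ k, A (a, Sum.inr b) k ^ 2 := by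
  simp [frobSq, Fintype.sum_prod_type, Fintype.sum_sum_type, Finset.sum_add_distrib]

lemma sum_indicator {m sN : ℕ} (h : sN ≤ m) :
    ∑ i : Fin m, (if (i : ℕ) < sN then (1:ℝ) else 0) = sN := by
  rw [Fin.sum_univ_eq_sum_range (fun n => if n < sN then (1:ℝ) else 0)]
  have hf : (Finset.range m).filter (fun n => n < sN) = Finset.range sN := by
    ext n; simp; omega
  rw [Finset.sum_ite, hf]
  simp

lemma rearrange_bound {m sN : ℕ} (hsm : sN ≤ m) (c r : Fin m → ℝ)
    (hc : ∀ i j : Fin m, i ≤ j → c j ≤ c i) (hc0 : ∀ i, 0 ≤ c i)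
    (hr0 : ∀ i, 0 ≤ r i) (hr1 : ∀ i, r i ≤ 1)
    (hsum : ∑ i, r i = (sN : ℝ)) :
    ∑ i, c i * r i ≤ ∑ i, c i * (if (i : ℕ) < sN then 1 else 0) := by
  set θ : ℝ := if h : sN < m then c ⟨sN, h⟩ else 0 with hθ
  have hterm : ∀ i : Fin m, (c i - θ) * r i ≤ (c i - θ) * (if (i : ℕ) < sN then 1 else 0) := by
    intro i
    by_cases hi : (i : ℕ) < sN
    · rw [if_pos hi, mul_one]
      have hθle : θ ≤ c i := by
        by_cases h : sN < m
        · simp only [hθ, dif_pos h]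
          exact hc i ⟨sN, h⟩ (by simp [Fin.le_def]; omega)
        · simp only [hθ, dif_neg h]; exact hc0 i
      nlinarith [hr1 i, hr0 i]
    · rw [if_neg hi, mul_zero]
      have hm : sN < m := lt_of_le_of_lt (le_of_not_gt hi) i.isLt
      have hθge : c i ≤ θ := by
        simp only [hθ, dif_pos hm]
        exact hc ⟨sN, hm⟩ i (by simp [Fin.le_def]; omega)
      nlinarith [hr0 i]
  have hsum' : ∑ i : Fin m, (c i - θ) * r i ≤ ∑ i, (c i - θ) * (if (i : ℕ) < sN then 1 else 0) :=
    Finset.sum_le_sum (fun i _ => hterm i)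
  have e1 : ∑ i : Fin m, (c i - θ) * r i = (∑ i, c i * r i) - θ * ∑ i, r i := by
    rw [Finset.mul_sum, ← Finset.sum_sub_distrib]; congr 1; ext i; ring
  have e2 : ∑ i : Fin m, (c i - θ) * (if (i : ℕ) < sN then 1 else 0)
      = (∑ i, c i * (if (i : ℕ) < sN then 1 else 0))
        - θ * ∑ i : Fin m, (if (i : ℕ) < sN then (1:ℝ) else 0) := by
    rw [Finset.mul_sum, ← Finset.sum_sub_distrib]; congr 1; ext i; ring
  rw [e1, e2, hsum, sum_indicator hsm] at hsum'
  linarith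

lemma svDiag_mul_tr (m a b : ℕ) (ω : ℕ → ℝ) :
    svDiagR m a b ω * (svDiagR m a b ω)ᵀ
      = Matrix.diagonal (fun i : Fin m => if (i : ℕ) < a * b then ω i ^ 2 else 0) := by
  ext i i'
  rw [Matrix.mul_apply]
  simp only [svDiagR, transpose_apply, Matrix.of_apply]
  rw [← Equiv.sum_comp finProdFinEquiv.symm
    (fun q : Fin a × Fin b => (if (i:ℕ) = ((finProdFinEquiv q : Fin (a*b)):ℕ) then ω i else 0)
      * (if (i':ℕ) = ((finProdFinEquiv q : Fin (a*b)):ℕ) then ω i' else 0))]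
  simp only [Equiv.apply_symm_apply]
  rw [Fin.sum_univ_eq_sum_range (fun n =>
    (if (i:ℕ) = n then ω i else 0) * (if (i':ℕ) = n then ω i' else 0))]
  by_cases hii : i = i'
  · subst hii
    have : ∀ n, (if (i:ℕ) = n then ω i else 0) * (if (i:ℕ) = n then ω i else 0)
        = if (i:ℕ) = n then ω i ^ 2 else 0 := by
      intro n; split_ifs <;> ring
    simp only [this]
    rw [Finset.sum_ite_eq (Finset.range (a*b)) (i:ℕ) (fun _ => ω i ^ 2)]
    simp [Matrix.diagonal, Finset.mem_range]
  · have : ∀ n ∈ Finset.range (a*b),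
        (if (i:ℕ) = n then ω i else 0) * (if (i':ℕ) = n then ω i' else 0) = 0 := by
      intro n _
      split_ifs with h1 h2
      · exact absurd (Fin.ext (h1.trans h2.symm)) hii
      all_goals ring
    rw [Finset.sum_eq_zero this]
    simp [Matrix.diagonal, hii]

lemma trace_conj_diag {m s : ℕ} (Q : Matrix (Fin m) (Fin s) ℝ) (c : Fin m → ℝ) :
    Matrix.trace (Qᵀ * Matrix.diagonal c * Q) = ∑ i, c i * ∑ b, Q i b ^ 2 := by
  rw [Matrix.mul_assoc]
  simp only [Matrix.trace, Matrix.diag, Matrix.mul_apply, Matrix.transpose_apply,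
    Matrix.diagonal_apply, ite_mul, zero_mul, Finset.sum_ite_eq, Finset.mem_univ, if_true]
  rw [Finset.sum_comm]
  congr 1; ext i
  rw [Finset.mul_sum]
  congr 1; ext b
  ring

lemma split_frob {ns nd np ls ld s m : ℕ}
    (J : Matrix (Fin ns × Fin nd) (Fin np) ℝ)
    (W : Matrix (Fin ns) (Fin ls) ℝ)
    (V : Matrix (Fin nd) (Fin ld) ℝ) (Vc : Matrix (Fin nd) (Fin m) ℝ)
    (Γ : Matrix (Fin m) (Fin s) ℝ) :
    frobSq ((Wᵀ ⊗ₖ (Matrix.fromCols V (Vc * Γ))ᵀ) * J)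
      = (∑ a, ∑ b, ∑ k, (∑ j, ∑ i, W j a * V i b * J (j, i) k) ^ 2)
        + frobSq (Γᵀ * (Vcᵀ * (Matrix.of fun i (q : Fin ls × Fin np) =>
            starOp (fun j => W j q.1) J i q.2))) := by
  rw [frobSq_rows_split]
  congr 1
  · apply Finset.sum_congr rfl; intro a _
    apply Finset.sum_congr rfl; intro b _
    apply Finset.sum_congr rfl; intro k _
    congr 1
    simp [Matrix.mul_apply, Matrix.kroneckerMap_apply, Matrix.transpose_apply,
      Matrix.fromCols_apply_inl, Fintype.sum_prod_type]
  · rw [show frobSq (Γᵀ * (Vcᵀ * (Matrix.of fun i (q : Fin ls × Fin np) =>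
        starOp (fun j => W j q.1) J i q.2)))
      = ∑ b : Fin s, ∑ a : Fin ls, ∑ k : Fin np,
          ((Γᵀ * (Vcᵀ * (Matrix.of fun i (q : Fin ls × Fin np) =>
            starOp (fun j => W j q.1) J i q.2))) b (a, k)) ^ 2 by
      simp [frobSq, Fintype.sum_prod_type]]
    rw [Finset.sum_comm]
    apply Finset.sum_congr rfl; intro a _
    apply Finset.sum_congr rfl; intro b _
    apply Finset.sum_congr rfl; intro k _
    congr 1
    simp only [Matrix.mul_apply, Matrix.kroneckerMap_apply, Matrix.transpose_apply,
      Matrix.fromCols_apply_inr, Matrix.of_apply, starOp, Fintype.sum_prod_type,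
      Finset.mul_sum, Finset.sum_mul]
    conv_rhs => rw [Finset.sum_comm]
    rw [Finset.sum_comm]
    apply Finset.sum_congr rfl; intro i _
    rw [Finset.sum_comm]
    apply Finset.sum_congr rfl; intro i' _
    apply Finset.sum_congr rfl; intro j _
    ring

lemma frob_QtD {m a b s : ℕ} (Q : Matrix (Fin m) (Fin s) ℝ) (ω : ℕ → ℝ) :
    frobSq (Qᵀ * svDiagR m a b ω)
      = ∑ i : Fin m, (if (i : ℕ) < a * b then ω i ^ 2 else 0) * ∑ bb : Fin s, Q i bb ^ 2 := by
  rw [frobSq_eq_trace, Matrix.transpose_mul, Matrix.transpose_transpose,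
    show Qᵀ * svDiagR m a b ω * ((svDiagR m a b ω)ᵀ * Q)
      = Qᵀ * (svDiagR m a b ω * (svDiagR m a b ω)ᵀ) * Q by simp only [Matrix.mul_assoc],
    svDiag_mul_tr, trace_conj_diag]

/-- Let `[V V_c]` be orthogonal, `W` have orthonormal columns, `Ĵ_a = w_a ⋆ J`, and let
`V_cᵀ [Ĵ_1 … Ĵ_{ℓ_s}] = Φ Ω Ψᵀ` be an SVD with decreasing singular values.  Then
`Γ = [φ_1 … φ_s]` maximizes `‖(Wᵀ ⊗ [V, V_c Γ̃]ᵀ) J‖_F²` over all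
`Γ̃ ∈ ℝ^{(n_d - ℓ_d) × s}` with orthonormal columns. -/
theorem adding_detectors_optimal
    (nd ns np ls ld s : ℕ) (hs : s ≤ nd - ld)
    (J : Matrix (Fin ns × Fin nd) (Fin np) ℝ)
    (W : Matrix (Fin ns) (Fin ls) ℝ) (hW : Wᵀ * W = 1)
    (V : Matrix (Fin nd) (Fin ld) ℝ) (Vc : Matrix (Fin nd) (Fin (nd - ld)) ℝ)
    (hVVc : (Matrix.fromCols V Vc)ᵀ * Matrix.fromCols V Vc = 1)
    (Φ : Matrix (Fin (nd - ld)) (Fin (nd - ld)) ℝ)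
    (Ψ : Matrix (Fin ls × Fin np) (Fin ls × Fin np) ℝ) (ω : ℕ → ℝ)
    (hΦ : Φᵀ * Φ = 1) (hΨ : Ψᵀ * Ψ = 1)
    (hword : ∀ i j : ℕ, i ≤ j → ω j ≤ ω i) (hw0 : ∀ i, 0 ≤ ω i)
    (hSVD : Vcᵀ * (Matrix.of fun i (q : Fin ls × Fin np) => starOp (fun j => W j q.1) J i q.2)
      = Φ * svDiagR (nd - ld) ls np ω * Ψᵀ) :
    IsGreatest
      {x : ℝ | ∃ Γt : Matrix (Fin (nd - ld)) (Fin s) ℝ, Γtᵀ * Γt = 1 ∧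
        x = frobSq ((Wᵀ ⊗ₖ (Matrix.fromCols V (Vc * Γt))ᵀ) * J)}
      (frobSq ((Wᵀ ⊗ₖ (Matrix.fromCols V (Vc * Φ.submatrix id (Fin.castLE hs)))ᵀ) * J)) := by
  set c : Fin (nd - ld) → ℝ := fun i => if (i : ℕ) < ls * np then ω i ^ 2 else 0 with hc
  set Γ₀ : Matrix (Fin (nd - ld)) (Fin s) ℝ := Φ.submatrix id (Fin.castLE hs) with hΓ₀def
  have hΦΦ : Φ * Φᵀ = 1 := mul_eq_one_comm.mp hΦ
  -- master formula
  have master : ∀ Γ : Matrix (Fin (nd - ld)) (Fin s) ℝ, Γᵀ * Γ = 1 →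
      frobSq ((Wᵀ ⊗ₖ (Matrix.fromCols V (Vc * Γ))ᵀ) * J)
        = (∑ a, ∑ b, ∑ k, (∑ j, ∑ i, W j a * V i b * J (j, i) k) ^ 2)
          + ∑ i, c i * ∑ b, ((Φᵀ * Γ) i b) ^ 2 := by
    intro Γ hΓ
    rw [split_frob, hSVD]
    congr 1
    have e : Γᵀ * (Φ * svDiagR (nd - ld) ls np ω * Ψᵀ)
        = ((Φᵀ * Γ)ᵀ * svDiagR (nd - ld) ls np ω) * Ψᵀ := by
      rw [Matrix.transpose_mul, Matrix.transpose_transpose]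
      simp only [Matrix.mul_assoc]
    rw [e, frobSq_mul_orth _ _ hΨ, frob_QtD]
  -- orthonormality of Γ₀
  have hΓ₀ : Γ₀ᵀ * Γ₀ = 1 := by
    ext b b'
    have h1 := congrFun (congrFun hΦ (Fin.castLE hs b)) (Fin.castLE hs b')
    simp only [Matrix.mul_apply, Matrix.transpose_apply, Matrix.one_apply] at h1 ⊢
    simp only [hΓ₀def, Matrix.submatrix_apply, id_eq]
    rw [h1]
    simp [Fin.castLE_inj]
  -- value of the row sums for Γ₀
  have hQ0 : ∀ (i : Fin (nd - ld)) (b : Fin s),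
      (Φᵀ * Γ₀) i b = if i = Fin.castLE hs b then 1 else 0 := by
    intro i b
    have h := congrFun (congrFun hΦ i) (Fin.castLE hs b)
    simp only [Matrix.mul_apply, Matrix.transpose_apply, Matrix.one_apply] at h ⊢
    simp only [hΓ₀def, Matrix.submatrix_apply, id_eq]
    exact h
  have hr0' : ∀ i : Fin (nd - ld), ∑ b, ((Φᵀ * Γ₀) i b) ^ 2 = if (i : ℕ) < s then 1 else 0 := by
    intro i
    simp only [hQ0]
    by_cases h : (i : ℕ) < s
    · rw [if_pos h, Finset.sum_eq_single (⟨(i : ℕ), h⟩ : Fin s)]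
      · rw [if_pos (by apply Fin.ext; simp)]; norm_num
      · intro b _ hb
        rw [if_neg, zero_pow (by norm_num)]
        intro hcon
        exact hb (by apply Fin.ext; simpa using congrArg Fin.val hcon.symm)
      · intro hcon; exact absurd (Finset.mem_univ _) hcon
    · rw [if_neg h]
      apply Finset.sum_eq_zero
      intro b _
      rw [if_neg, zero_pow (by norm_num)]
      intro hcon
      exact h (by rw [hcon]; simpa using b.isLt)
  constructor
  · exact ⟨Γ₀, hΓ₀, rfl⟩
  · rintro x ⟨Γ, hΓ, rfl⟩
    rw [master Γ hΓ, master Γ₀ hΓ₀]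
    apply add_le_add_right
    have hrw : ∑ i, c i * ∑ b, ((Φᵀ * Γ₀) i b) ^ 2
        = ∑ i : Fin (nd - ld), c i * (if (i : ℕ) < s then 1 else 0) := by
      apply Finset.sum_congr rfl; intro i _; rw [hr0' i]
    rw [hrw]
    -- properties of Q = Φᵀ Γ
    set Q : Matrix (Fin (nd - ld)) (Fin s) ℝ := Φᵀ * Γ with hQdef
    have hQ : Qᵀ * Q = 1 := by
      have h : Qᵀ * Q = Γᵀ * (Φ * (Φᵀ * Γ)) := by
        rw [hQdef, Matrix.transpose_mul, Matrix.transpose_transpose]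
        simp only [Matrix.mul_assoc]
      rw [h, ← Matrix.mul_assoc Φ, hΦΦ, Matrix.one_mul, hΓ]
    apply rearrange_bound hs
    · intro i j hij
      simp only [hc]
      by_cases hj : (j : ℕ) < ls * np
      · rw [if_pos hj, if_pos (lt_of_le_of_lt (Fin.le_def.mp hij) hj)]
        have h1 := hword (i : ℕ) (j : ℕ) (Fin.le_def.mp hij)
        nlinarith [hw0 (i : ℕ), hw0 (j : ℕ)]
      · rw [if_neg hj]
        split_ifs with h
        · positivity
        · exact le_refl 0
    · intro i; simp only [hc]; split_ifs <;> positivity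
    · intro i; positivity
    · -- row sums at most 1
      intro i
      set P : Matrix (Fin (nd - ld)) (Fin (nd - ld)) ℝ := Q * Qᵀ with hPdef
      have hPP : P * P = P := by
        rw [hPdef, Matrix.mul_assoc, ← Matrix.mul_assoc Qᵀ, hQ, Matrix.one_mul]
      have hPsym : ∀ a b, P b a = P a b := by
        intro a b
        have h : Pᵀ = P := by rw [hPdef, Matrix.transpose_mul, Matrix.transpose_transpose]
        exact (congrFun (congrFun h a) b)
      have hPii : P i i = ∑ b, Q i b ^ 2 := by
        simp [hPdef, Matrix.mul_apply, sq]
      have h1 : P i i = ∑ j, P i j ^ 2 := by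
        conv_lhs => rw [← hPP]
        rw [Matrix.mul_apply]
        apply Finset.sum_congr rfl; intro j _
        rw [hPsym j i, sq]
      have h2 : P i i ^ 2 ≤ ∑ j, P i j ^ 2 :=
        Finset.single_le_sum (fun j _ => sq_nonneg (P i j)) (Finset.mem_univ i)
      have h3 : 0 ≤ P i i := by rw [hPii]; positivity
      rw [← hPii]
      nlinarith [h1, h2, h3]
    · -- row sums add to s
      have hdiag : ∀ b : Fin s, ∑ i, Q i b ^ 2 = 1 := by
        intro b
        have h := congrFun (congrFun hQ b) b
        simp only [Matrix.mul_apply, Matrix.transpose_apply, Matrix.one_apply_eq] at h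
        simpa [sq] using h
      rw [Finset.sum_comm]
      simp [hdiag]
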